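/- If G is a connected graph with maximum degree Δ where 3 ≤ Δ ≤ n−2 (n the order of G), then F_c(G) ≤ γ_c(G)·(Δ − 1). -/

import Mathlib

open SimpleGraph

variable {V : Type*}

/-- One step of the (zero) forcing process: a colored vertex with exactly one
uncolored neighbor forces that neighbor to become colored. -/
def zfStep (G : SimpleGraph V) (S : Set V) : Set V :=
  S ∪ {w | ∃ v ∈ S, G.neighborSet v \ S = {w}}

/-- `S` is a forcing set if iterating the forcing process colors all vertices. -/
def IsForcingSet (G : SimpleGraph V) (S : Set V) : Prop :=
  ∃ n : ℕ, (zfStep G)^[n] S = Set.univ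

/-- A connected forcing set: a forcing set inducing a connected subgraph. -/
def IsConnForcingSet (G : SimpleGraph V) (S : Set V) : Prop :=
  IsForcingSet G S ∧ (G.induce S).Connected

/-- The forcing number `F(G)`. -/
noncomputable def forcingNumber (G : SimpleGraph V) : ℕ :=
  sInf (Set.ncard '' {S : Set V | IsForcingSet G S})

/-- The connected forcing number `F_c(G)`. -/
noncomputable def connForcingNumber (G : SimpleGraph V) : ℕ :=
  sInf (Set.ncard '' {S : Set V | IsConnForcingSet G S})

/-- A connected dominating set: every vertex outside `D` has a neighbor in `D`,
and `D` induces a connected subgraph. -/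
def IsConnDomSet (G : SimpleGraph V) (D : Set V) : Prop :=
  (∀ v ∉ D, ∃ u ∈ D, G.Adj u v) ∧ (G.induce D).Connected

/-- The connected domination number `γ_c(G)`. -/
noncomputable def connDomNumber (G : SimpleGraph V) : ℕ :=
  sInf (Set.ncard '' {D : Set V | IsConnDomSet G D})

/-! ### Auxiliary lemmas -/

lemma aux_reachable_mono (G : SimpleGraph V) {D S : Set V} (hDS : D ⊆ S) {a b : V}
    (ha : a ∈ D) (hb : b ∈ D) (h : (G.induce D).Reachable ⟨a, ha⟩ ⟨b, hb⟩) :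
    (G.induce S).Reachable ⟨a, hDS ha⟩ ⟨b, hDS hb⟩ := by
  let f : G.induce D →g G.induce S := ⟨fun x => ⟨x.1, hDS x.2⟩, fun h => h⟩
  exact h.map f

/-- If `D ⊆ S` induces a connected subgraph and every vertex of `S` outside `D`
has a neighbor in `D`, then `S` induces a connected subgraph. -/
lemma conn_of_dom (G : SimpleGraph V) {D S : Set V} (hDS : D ⊆ S)
    (hD : (G.induce D).Connected)
    (hdom : ∀ x ∈ S, x ∉ D → ∃ d ∈ D, G.Adj d x) : (G.induce S).Connected := by
  obtain ⟨d0, hd0⟩ : D.Nonempty := by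
    obtain ⟨⟨d, hd⟩⟩ := hD.nonempty; exact ⟨d, hd⟩
  have key : ∀ x : S, (G.induce S).Reachable x ⟨d0, hDS hd0⟩ := by
    rintro ⟨x, hx⟩
    by_cases hxD : x ∈ D
    · exact aux_reachable_mono G hDS hxD hd0 (hD.preconnected _ _)
    · obtain ⟨d, hd, hadj⟩ := hdom x hx hxD
      have h1 : (G.induce S).Adj ⟨x, hx⟩ ⟨d, hDS hd⟩ := hadj.symm
      exact h1.reachable.trans (aux_reachable_mono G hDS hd hd0 (hD.preconnected _ _))
  have : Nonempty S := ⟨⟨d0, hDS hd0⟩⟩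
  exact ⟨fun a b => (key a).trans (key b).symm⟩

lemma walk_crossing (G : SimpleGraph V) {D : Set V} (T : Finset V) :
    ∀ {a b : ↥D} (_ : (G.induce D).Walk a b), (a : V) ∉ T → (b : V) ∈ T →
    ∃ x, x ∈ D ∧ x ∉ T ∧ ∃ t ∈ T, G.Adj t x := by
  intro a b p
  induction p with
  | nil => intro h1 h2; exact absurd h2 h1
  | @cons u v w h q ih =>
    intro h1 h2
    by_cases hv : (v : V) ∈ T
    · exact ⟨u, u.2, h1, v, hv, (by exact h : G.Adj (u : V) (v : V)).symm⟩
    · exact ih hv h2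

lemma exists_crossing_adj (G : SimpleGraph V) {D : Set V} (hD : (G.induce D).Connected)
    (T : Finset V) (hTD : ∀ x ∈ T, x ∈ D) (hne : T.Nonempty)
    {x0 : V} (hx0D : x0 ∈ D) (hx0T : x0 ∉ T) :
    ∃ x, x ∈ D ∧ x ∉ T ∧ ∃ t ∈ T, G.Adj t x := by
  obtain ⟨t0, ht0⟩ := hne
  obtain ⟨p⟩ := hD.preconnected ⟨x0, hx0D⟩ ⟨t0, hTD _ ht0⟩
  exact walk_crossing G T p hx0T ht0

open Finset in
/-- A connected graph on the vertex set `D'` has total internal degree at least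
`2 * (|D'| - 1)`. -/
lemma sum_indeg_ge [DecidableEq V] (G : SimpleGraph V) [DecidableRel G.Adj] (D' : Finset V)
    (hconn : (G.induce (↑D' : Set V)).Connected) (hne : D'.Nonempty) :
    2 * (D'.card - 1) ≤ ∑ d ∈ D', (D'.filter (fun y => G.Adj d y)).card := by
  suffices H : ∀ m (T : Finset V), T ⊆ D' → T.Nonempty → (D' \ T).card = m →
      2 * (T.card - 1) ≤ ∑ d ∈ T, (T.filter (fun y => G.Adj d y)).card →
      2 * (D'.card - 1) ≤ ∑ d ∈ D', (D'.filter (fun y => G.Adj d y)).card by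
    obtain ⟨t0, ht0⟩ := hne
    exact H _ {t0} (by simpa) ⟨t0, mem_singleton_self t0⟩ rfl (by simp)
  intro m
  induction m with
  | zero =>
    intro T hsub hTne h0 hsum
    have hTD : T = D' := by
      apply Finset.eq_of_subset_of_card_le hsub
      have := Finset.card_sdiff_add_card_eq_card hsub
      omega
    subst hTD; exact hsum
  | succ m ih =>
    intro T hsub hTne hcard hsum
    have hproper : ∃ x0, x0 ∈ D' ∧ x0 ∉ T := by
      have : (D' \ T).Nonempty := Finset.card_pos.mp (by omega)
      obtain ⟨x, hx⟩ := this
      exact ⟨x, (Finset.mem_sdiff.mp hx).1, (Finset.mem_sdiff.mp hx).2⟩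
    obtain ⟨x0, hx0D, hx0T⟩ := hproper
    obtain ⟨x, hxD, hxT, t, htT, hadj⟩ :=
      exists_crossing_adj G hconn T (fun y hy => hsub hy) hTne hx0D hx0T
    have hxD' : x ∈ D' := hxD
    apply ih (insert x T) (Finset.insert_subset hxD' hsub) (Finset.insert_nonempty _ _)
    · rw [Finset.sdiff_insert, Finset.card_erase_of_mem (Finset.mem_sdiff.mpr ⟨hxD', hxT⟩), hcard]
      omega
    · rw [Finset.sum_insert hxT]
      have hx_term : 1 ≤ ((insert x T).filter (fun y => G.Adj x y)).card := by
        apply Finset.card_pos.mpr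
        exact ⟨t, Finset.mem_filter.mpr ⟨Finset.mem_insert_of_mem htT, hadj.symm⟩⟩
      have hmono : ∀ d ∈ T, (T.filter (fun y => G.Adj d y)).card
          ≤ ((insert x T).filter (fun y => G.Adj d y)).card :=
        fun d _ => Finset.card_le_card (Finset.filter_subset_filter _ (Finset.subset_insert _ _))
      have hstrict : (T.filter (fun y => G.Adj t y)).card
          < ((insert x T).filter (fun y => G.Adj t y)).card := by
        apply Finset.card_lt_card
        constructor
        · exact Finset.filter_subset_filter _ (Finset.subset_insert _ _)
        · intro hs
          have : x ∈ T.filter (fun y => G.Adj t y) :=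
            hs (Finset.mem_filter.mpr ⟨Finset.mem_insert_self _ _, hadj⟩)
          exact hxT (Finset.mem_filter.mp this).1
      have hsum2 : (∑ d ∈ T, (T.filter (fun y => G.Adj d y)).card) + 1
          ≤ ∑ d ∈ T, ((insert x T).filter (fun y => G.Adj d y)).card :=
        Finset.sum_lt_sum hmono ⟨t, htT, hstrict⟩
      rw [Finset.card_insert_of_notMem hxT]
      have hT1 : 1 ≤ T.card := hTne.card_pos
      omega

lemma exists_adj_of_connected [Fintype V] (G : SimpleGraph V) (hG : G.Connected)
    (hcard : 1 < Fintype.card V) (x : V) : ∃ y, G.Adj x y := by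
  obtain ⟨z, hz⟩ := Fintype.exists_ne_of_one_lt_card hcard x
  obtain ⟨p⟩ := hG.preconnected x z
  cases p with
  | nil => exact absurd rfl hz.symm
  | cons h q => exact ⟨_, h⟩

lemma exists_adj_dist_lt (G : SimpleGraph V) (hG : G.Connected) {r x : V} (hx : x ≠ r) :
    ∃ y, G.Adj x y ∧ G.dist r y < G.dist r x := by
  obtain ⟨p, hp⟩ := hG.exists_walk_length_eq_dist x r
  cases p with
  | nil => exact absurd rfl hx
  | @cons _ y _ h q =>
    refine ⟨y, h, ?_⟩
    have h1 : G.dist r y ≤ q.length := by rw [dist_comm]; exact dist_le q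
    have h2 : G.dist r x = q.length + 1 := by
      rw [dist_comm, ← hp]; simp [Walk.length_cons]
    omega

/-- A connected graph on at least two vertices has a vertex whose removal
keeps it connected (any vertex farthest from a fixed root). -/
lemma exists_removable [Fintype V] (G : SimpleGraph V) (hG : G.Connected)
    (hcard : 1 < Fintype.card V) :
    ∃ u : V, (G.induce (Set.univ \ {u})).Connected := by
  have : Nonempty V := Fintype.card_pos_iff.mp (by omega)
  obtain ⟨r⟩ := this
  obtain ⟨u, -, hmax⟩ := Finset.exists_max_image Finset.univ (G.dist r) ⟨r, Finset.mem_univ r⟩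
  obtain ⟨z, hz⟩ := Fintype.exists_ne_of_one_lt_card hcard r
  have hupos : 0 < G.dist r u :=
    lt_of_lt_of_le (hG.pos_dist_of_ne hz.symm) (hmax z (Finset.mem_univ z))
  have hur : u ≠ r := by rintro rfl; simp [SimpleGraph.dist_self] at hupos
  set S : Set V := Set.univ \ {u} with hS
  have hrS : r ∈ S := ⟨Set.mem_univ r, fun h => hur (h.symm)⟩
  have key : ∀ m : ℕ, ∀ x, (hx : x ∈ S) → G.dist r x = m →
      (G.induce S).Reachable ⟨x, hx⟩ ⟨r, hrS⟩ := by
    intro m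
    induction m using Nat.strong_induction_on with
    | _ m ih =>
      intro x hx hdist
      by_cases hxr : x = r
      · subst hxr; exact Reachable.refl _
      · obtain ⟨y, hadj, hlt⟩ := exists_adj_dist_lt G hG hxr
        have hyu : y ≠ u := by
          rintro rfl
          exact absurd (hmax x (Finset.mem_univ x)) (not_le.mpr hlt)
        have hyS : y ∈ S := ⟨Set.mem_univ y, hyu⟩
        have step : (G.induce S).Adj ⟨x, hx⟩ ⟨y, hyS⟩ := hadj
        exact step.reachable.trans (ih (G.dist r y) (hdist ▸ hlt) y hyS rfl)
  have : Nonempty S := ⟨⟨r, hrS⟩⟩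
  exact ⟨u, ⟨fun a b => ((key _ a a.2 rfl).trans (key _ b b.2 rfl).symm)⟩⟩

/-- If `G` is a connected graph of order `n` with maximum degree `Δ` satisfying
`3 ≤ Δ ≤ n - 2`, then `F_c(G) ≤ γ_c(G)(Δ - 1)`. -/
theorem connForcingNumber_le_connDomNumber_mul {V : Type*} [Fintype V]
    (G : SimpleGraph V) [DecidableRel G.Adj] (hG : G.Connected)
    (h3 : 3 ≤ G.maxDegree) (hn : G.maxDegree ≤ Fintype.card V - 2) :
    connForcingNumber G ≤ connDomNumber G * (G.maxDegree - 1) := by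
  classical
  set n := Fintype.card V with hn'
  set Δ := G.maxDegree with hΔ'
  have hΔn : Δ + 2 ≤ n := by omega
  -- a connected dominating set attaining the minimum
  have hmem : connDomNumber G ∈ Set.ncard '' {D : Set V | IsConnDomSet G D} := by
    apply Nat.sInf_mem
    exact ⟨(Set.univ : Set V).ncard, ⟨Set.univ,
      ⟨fun v hv => absurd (Set.mem_univ v) hv, ((induceUnivIso G).connected_iff).mpr hG⟩, rfl⟩⟩
  obtain ⟨D, hD, hDcard⟩ := hmem
  replace hD : IsConnDomSet G D := hD
  set k := connDomNumber G with hk'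
  set K := k * (Δ - 1) with hK'
  set D' : Finset V := (Set.toFinite D).toFinset with hD''
  have hcoe : (↑D' : Set V) = D := Set.Finite.coe_toFinset _
  have hkD : D'.card = k := by
    rw [← hDcard, Set.ncard_eq_toFinset_card D (Set.toFinite D)]
  have hDconn : (G.induce (↑D' : Set V)).Connected := by rw [hcoe]; exact hD.2
  have hDne : D'.Nonempty := by
    obtain ⟨⟨d, hd⟩⟩ := hDconn.nonempty
    exact ⟨d, hd⟩
  have hk1 : 1 ≤ k := hkD ▸ hDne.card_pos
  set Dc : Finset V := Finset.univ \ D' with hDc'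
  -- counting
  have hA1 : ∀ x ∈ Dc, 1 ≤ (D'.filter (fun d => G.Adj d x)).card := by
    intro x hx
    have hxD : x ∉ D := by
      rw [← hcoe]
      exact fun h => (Finset.mem_sdiff.mp hx).2 h
    obtain ⟨d, hd, hadj⟩ := hD.1 x hxD
    exact Finset.card_pos.mpr ⟨d, Finset.mem_filter.mpr ⟨by rw [← hcoe] at hd; exact hd, hadj⟩⟩
  have hsum1 : Dc.card ≤ ∑ x ∈ Dc, (D'.filter (fun d => G.Adj d x)).card := by
    calc Dc.card = ∑ _x ∈ Dc, 1 := by simp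
    _ ≤ _ := Finset.sum_le_sum hA1
  have hcomm : ∑ x ∈ Dc, (D'.filter (fun d => G.Adj d x)).card
      = ∑ d ∈ D', (Dc.filter (fun y => G.Adj d y)).card := by
    simp only [Finset.card_filter]
    exact Finset.sum_comm
  have hdegsplit : ∀ d : V, (D'.filter (fun y => G.Adj d y)).card
      + (Dc.filter (fun y => G.Adj d y)).card = G.degree d := by
    intro d
    have h0 : G.degree d = (Finset.univ.filter (fun y => G.Adj d y)).card := by
      rw [← SimpleGraph.card_neighborFinset_eq_degree, neighborFinset_eq_filter]
    have h1 : Finset.univ.filter (fun y => G.Adj d y)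
        = D'.filter (fun y => G.Adj d y) ∪ Dc.filter (fun y => G.Adj d y) := by
      rw [← Finset.filter_union, Finset.union_sdiff_of_subset (Finset.subset_univ D')]
    rw [h0, h1, Finset.card_union_of_disjoint
      (Finset.disjoint_filter_filter Finset.disjoint_sdiff)]
  have hdegsum : (∑ d ∈ D', (D'.filter (fun y => G.Adj d y)).card)
      + (∑ d ∈ D', (Dc.filter (fun y => G.Adj d y)).card) ≤ k * Δ := by
    rw [← Finset.sum_add_distrib]
    calc ∑ d ∈ D', ((D'.filter (fun y => G.Adj d y)).card
          + (Dc.filter (fun y => G.Adj d y)).card)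
        = ∑ d ∈ D', G.degree d := Finset.sum_congr rfl (fun d _ => hdegsplit d)
      _ ≤ ∑ _d ∈ D', Δ := Finset.sum_le_sum (fun d _ => G.degree_le_maxDegree d)
      _ = k * Δ := by rw [Finset.sum_const, smul_eq_mul, hkD]
  have hin : 2 * (k - 1) ≤ ∑ d ∈ D', (D'.filter (fun y => G.Adj d y)).card := by
    rw [← hkD]
    exact sum_indeg_ge G D' hDconn hDne
  have hcards : Dc.card + k = n := by
    rw [hDc', Finset.card_sdiff_of_subset (Finset.subset_univ _), Finset.card_univ, ← hkD]
    have := Finset.card_le_univ D'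
    omega
  have hKk : K + k = k * Δ := by
    rw [hK']
    obtain ⟨Δ'', hΔ''⟩ := Nat.exists_eq_add_of_le (show 1 ≤ Δ by omega)
    rw [hΔ'']
    have h9 : 1 + Δ'' - 1 = Δ'' := by omega
    rw [h9]
    ring
  by_cases hcase : n ≤ K + 1
  · -- easy case: a connected forcing set of size n - 1
    obtain ⟨u, hconnS⟩ := exists_removable G hG (by omega)
    obtain ⟨w, hw⟩ := exists_adj_of_connected G hG (by omega) u
    set S : Set V := Set.univ \ {u} with hS'
    have hwS : w ∈ S := ⟨Set.mem_univ w, fun h => (hw.ne).symm h⟩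
    have hNw : G.neighborSet w \ S = {u} := by
      ext y
      simp only [Set.mem_diff, mem_neighborSet, Set.mem_univ, true_and, Set.mem_singleton_iff,
        hS', not_not]
      constructor
      · rintro ⟨-, h2⟩; exact h2
      · rintro rfl; exact ⟨hw.symm, rfl⟩
    have hforce : IsForcingSet G S := by
      refine ⟨1, ?_⟩
      rw [Function.iterate_one]
      apply Set.eq_univ_iff_forall.mpr
      intro x
      by_cases hxu : x = u
      · subst hxu
        exact Set.mem_union_right _ ⟨w, hwS, hNw⟩
      · exact Set.mem_union_left _ ⟨Set.mem_univ x, hxu⟩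
    have hSmem : connForcingNumber G ≤ S.ncard := Nat.sInf_le ⟨S, ⟨hforce, hconnS⟩, rfl⟩
    have hncard : S.ncard = n - 1 := by
      rw [hS', Set.ncard_diff (Set.singleton_subset_iff.mpr (Set.mem_univ u)),
        Set.ncard_univ, Nat.card_eq_fintype_card, Set.ncard_singleton]
    omega
  · -- equality case
    have hge : K + 2 ≤ n := by omega
    have haeq : (∑ x ∈ Dc, (D'.filter (fun d => G.Adj d x)).card) = Dc.card := by omega
    have hA_each : ∀ x ∈ Dc, (D'.filter (fun d => G.Adj d x)).card = 1 := by
      have h1 : (∑ _x ∈ Dc, 1) = ∑ x ∈ Dc, (D'.filter (fun d => G.Adj d x)).card := by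
        rw [haeq]; simp
      intro x hx
      exact ((Finset.sum_eq_sum_iff_of_le hA1).mp h1 x hx).symm
    have huniq : ∀ x ∈ Dc, ∀ e1 ∈ D', ∀ e2 ∈ D', G.Adj e1 x → G.Adj e2 x → e1 = e2 := by
      intro x hx e1 he1 e2 he2 ha1 ha2
      exact Finset.card_le_one.mp (le_of_eq (hA_each x hx))
        e1 (Finset.mem_filter.mpr ⟨he1, ha1⟩) e2 (Finset.mem_filter.mpr ⟨he2, ha2⟩)
    have hk2 : 2 ≤ k := by
      by_contra hcon
      have hk1' : D'.card = 1 := by omega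
      obtain ⟨d, hd⟩ := Finset.card_eq_one.mp hk1'
      have ho : (∑ d ∈ D', (Dc.filter (fun y => G.Adj d y)).card)
          = (Dc.filter (fun y => G.Adj d y)).card := by rw [hd, Finset.sum_singleton]
      have h5 := hdegsplit d
      have h6 := G.degree_le_maxDegree d
      omega
    have htwo : ∃ d1 ∈ D', ∃ d2 ∈ D', d1 ≠ d2 ∧
        (Dc.filter (fun y => G.Adj d1 y)).Nonempty ∧
        (Dc.filter (fun y => G.Adj d2 y)).Nonempty := by
      by_contra hcon
      push_neg at hcon
      by_cases hex : ∃ d ∈ D', (Dc.filter (fun y => G.Adj d y)).Nonempty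
      · obtain ⟨ds, hds, hpos⟩ := hex
        have hzero : ∀ d ∈ D', d ≠ ds → (Dc.filter (fun y => G.Adj d y)).card = 0 := by
          intro d hd hne
          rcases Finset.eq_empty_or_nonempty (Dc.filter (fun y => G.Adj d y)) with h | h
          · simp [h]
          · exact absurd hpos (Finset.not_nonempty_iff_eq_empty.mpr (hcon d hd ds hds hne h))
        have hoeq : (∑ d ∈ D', (Dc.filter (fun y => G.Adj d y)).card)
            = (Dc.filter (fun y => G.Adj ds y)).card :=
          Finset.sum_eq_single_of_mem ds hds (fun b hb hbne => hzero b hb hbne)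
        have h5 := hdegsplit ds
        have h6 := G.degree_le_maxDegree ds
        -- now derive k*Δ + 2 ≤ Δ + 2*k, contradiction for k ≥ 2, Δ ≥ 3
        have hfin : k * Δ + 2 ≤ Δ + 2 * k := by omega
        obtain ⟨k2, hk2'⟩ := Nat.exists_eq_add_of_le hk2
        obtain ⟨d3, hd3'⟩ := Nat.exists_eq_add_of_le h3
        rw [hk2', hd3'] at hfin
        nlinarith [hfin]
      · push_neg at hex
        have hzero : ∀ d ∈ D', (Dc.filter (fun y => G.Adj d y)).card = 0 := by
          intro d hd
          rcases Finset.eq_empty_or_nonempty (Dc.filter (fun y => G.Adj d y)) with h | h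
          · simp [h]
          · exact absurd h (Finset.not_nonempty_iff_eq_empty.mpr (hex d hd))
        have ho : (∑ d ∈ D', (Dc.filter (fun y => G.Adj d y)).card) = 0 :=
          Finset.sum_eq_zero hzero
        have hK2k : 2 * k ≤ K := by
          rw [hK', mul_comm 2 k]
          exact Nat.mul_le_mul_left k (show 2 ≤ Δ - 1 by omega)
        omega
    obtain ⟨d1, hd1, d2, hd2, hne12, ⟨u, hu⟩, ⟨v, hv⟩⟩ := htwo
    have huDc : u ∈ Dc := (Finset.mem_filter.mp hu).1
    have hadj1 : G.Adj d1 u := (Finset.mem_filter.mp hu).2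
    have hvDc : v ∈ Dc := (Finset.mem_filter.mp hv).1
    have hadj2 : G.Adj d2 v := (Finset.mem_filter.mp hv).2
    have huv : u ≠ v := by
      rintro rfl
      exact hne12 (huniq u huDc d1 hd1 d2 hd2 hadj1 hadj2)
    have hnadj1v : ¬ G.Adj d1 v := fun h => hne12 (huniq v hvDc d1 hd1 d2 hd2 h hadj2)
    have huD : u ∉ D := by
      rw [← hcoe]; exact fun h => (Finset.mem_sdiff.mp huDc).2 h
    have hvD : v ∉ D := by
      rw [← hcoe]; exact fun h => (Finset.mem_sdiff.mp hvDc).2 h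
    set S : Set V := Set.univ \ {u, v} with hS'
    have hDS : D ⊆ S := by
      intro d hd
      refine ⟨Set.mem_univ d, ?_⟩
      rintro (rfl | rfl)
      · exact huD hd
      · exact hvD hd
    have hconnS : (G.induce S).Connected :=
      conn_of_dom G hDS hD.2 (fun x _ hxD => hD.1 x hxD)
    have hd1D : d1 ∈ D := by rw [← hcoe]; exact hd1
    have hd2D : d2 ∈ D := by rw [← hcoe]; exact hd2
    have hd1S : d1 ∈ S := hDS hd1D
    have hd2S : d2 ∈ S := hDS hd2D
    have hNd1 : G.neighborSet d1 \ S = {u} := by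
      ext y
      simp only [Set.mem_diff, mem_neighborSet, Set.mem_univ, true_and, Set.mem_singleton_iff,
        Set.mem_insert_iff, hS', not_not]
      constructor
      · rintro ⟨hadj, (rfl | rfl)⟩
        · rfl
        · exact absurd hadj hnadj1v
      · rintro rfl; exact ⟨hadj1, Or.inl rfl⟩
    have hu_step : u ∈ zfStep G S := Set.mem_union_right _ ⟨d1, hd1S, hNd1⟩
    have hSS1 : S ⊆ zfStep G S := Set.subset_union_left
    have hfinal : zfStep G (zfStep G S) = Set.univ := by
      by_cases hv1 : v ∈ zfStep G S
      · have hS1 : zfStep G S = Set.univ := by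
          apply Set.eq_univ_iff_forall.mpr
          intro x
          by_cases hx1 : x = u
          · subst hx1; exact hu_step
          · by_cases hx2 : x = v
            · subst hx2; exact hv1
            · exact hSS1 ⟨Set.mem_univ x, by simp [hx1, hx2]⟩
        rw [hS1]
        exact Set.eq_univ_of_univ_subset Set.subset_union_left
      · have hS1eq : zfStep G S = Set.univ \ {v} := by
          apply Set.Subset.antisymm
          · intro x hx1
            refine ⟨Set.mem_univ x, ?_⟩
            rintro rfl
            exact hv1 hx1
          · rintro x ⟨-, hxv⟩
            rw [Set.mem_singleton_iff] at hxv
            by_cases hx1 : x = u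
            · subst hx1; exact hu_step
            · exact hSS1 ⟨Set.mem_univ x, by simp [hx1, hxv]⟩
        apply Set.eq_univ_iff_forall.mpr
        intro x
        by_cases hxv : x = v
        · subst hxv
          apply Set.mem_union_right
          refine ⟨d2, ?_, ?_⟩
          · rw [hS1eq]
            exact ⟨Set.mem_univ d2, fun h => hvD (Set.mem_singleton_iff.mp h ▸ hd2D)⟩
          · rw [hS1eq]
            ext y
            simp only [Set.mem_diff, mem_neighborSet, Set.mem_univ, true_and,
              Set.mem_singleton_iff, not_not]
            constructor
            · rintro ⟨-, rfl⟩; rfl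
            · rintro rfl; exact ⟨hadj2, rfl⟩
        · apply Set.mem_union_left
          rw [hS1eq]
          exact ⟨Set.mem_univ x, fun h => hxv (Set.mem_singleton_iff.mp h)⟩
    have hforce : IsForcingSet G S := by
      refine ⟨2, ?_⟩
      rw [Function.iterate_succ_apply', Function.iterate_succ_apply',
        Function.iterate_zero_apply]
      exact hfinal
    have hSmem : connForcingNumber G ≤ S.ncard := Nat.sInf_le ⟨S, ⟨hforce, hconnS⟩, rfl⟩
    have hncard : S.ncard = n - 2 := by
      rw [hS', Set.ncard_diff (Set.subset_univ _), Set.ncard_univ, Nat.card_eq_fintype_card,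
        Set.ncard_pair huv]
    omega
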